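/- The numerical semigroup Γ generated by 6 and 43 satisfies the semigroup distribution property for d = 16: for every integer l ≥ 1 the half-open interval (16(l − 1), 16l] contains exactly min(l + 1, 16) elements of Γ. -/
import Mathlib

private def P (k : ℕ) : Prop := ∃ y ∈ Finset.range 6, 43*y ≤ k ∧ (k - 43*y) % 6 = 0

private instance : DecidablePred P := fun k => by unfold P; infer_instance

private lemma inG_iff (n : ℕ) : (∃ x y : ℕ, n = x * 6 + y * 43) ↔ P n := by
  constructor
  · rintro ⟨x, y, rfl⟩
    exact ⟨y % 6, Finset.mem_range.mpr (Nat.mod_lt _ (by norm_num)), by omega, by omega⟩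
  · rintro ⟨y, hy, h1, h2⟩
    exact ⟨(n - 43*y)/6, y, by omega⟩

private lemma set_eq (a b : ℕ) :
    {k : ℕ | (∃ x y : ℕ, k = x * 6 + y * 43) ∧ a < k ∧ k ≤ b}
      = ↑((Finset.Ioc a b).filter P) := by
  ext k
  simp only [Finset.coe_filter, Finset.mem_Ioc, Set.mem_setOf_eq, inG_iff]
  tauto

/-- `Γ` satisfies the semigroup distribution property for `d`: for every
`l ≥ 1` the half-open interval `((l−1)d, ld]` contains exactly
`min (l+1) d` elements of `Γ`. -/
def SemigroupDistributionProperty (Γ : Set ℕ) (d : ℕ) : Prop :=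
  ∀ l : ℕ, 1 ≤ l →
    {k : ℕ | k ∈ Γ ∧ (l - 1) * d < k ∧ k ≤ l * d}.ncard = min (l + 1) d

/-- The sporadic case (f): the semigroup `⟨6, 43⟩` of the cusp of the
Orevkov–Artal Bartolo curve of degree 16 satisfies the semigroup distribution
property for `d = 16`. -/
theorem distribution_property_case_f :
    SemigroupDistributionProperty
      {n : ℕ | ∃ x y : ℕ, n = x * 6 + y * 43} 16 := by
  intro l hl
  show ({k : ℕ | (∃ x y : ℕ, k = x * 6 + y * 43) ∧ (l-1)*16 < k ∧ k ≤ l*16}).ncard = _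
  rcases le_or_gt l 14 with h | h
  · interval_cases l <;>
    · rw [set_eq, Set.ncard_coe_finset]
      decide
  · have he : {k : ℕ | (∃ x y : ℕ, k = x*6+y*43) ∧ (l-1)*16 < k ∧ k ≤ l*16}
        = ↑(Finset.Ioc ((l-1)*16) (l*16)) := by
      ext k
      simp only [Finset.coe_Ioc, Set.mem_Ioc, Set.mem_setOf_eq]
      constructor
      · rintro ⟨_, h1, h2⟩; exact ⟨h1, h2⟩
      · rintro ⟨h1, h2⟩
        exact ⟨⟨k/6 - 7*(k%6), k%6, by omega⟩, h1, h2⟩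
    rw [he, Set.ncard_coe_finset, Nat.card_Ioc]
    omega
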